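/- Let (S, μ, η) be a monad on C equipped with a differential combinator transformation ∂. Then the differential combinator transformation is automatically compatible with negatives: [DC.N] S(⟨π₁, −π₂⟩)∘∂_A = −∂_A as morphisms S(A) → S(A×A). -/
import Mathlib


open CategoryTheory CategoryTheory.Limits

universe v u

variable {C : Type u} [Category.{v} C] [Preadditive C] [HasBinaryBiproducts C]

/-- A differential combinator transformation on a monad `S`. -/
structure DiffCombTrans (S : Monad C) where
  d : ∀ A : C, S.obj A ⟶ S.obj (A ⊞ A)
  natural : ∀ {A B : C} (f : A ⟶ B), S.map f ≫ d B = d A ≫ S.map (biprod.map f f)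
  dc1 : ∀ A : C, d A ≫ S.map biprod.fst = 0
  dc2 : ∀ A : C,
    d A ≫ S.map (biprod.lift biprod.fst (biprod.lift biprod.snd biprod.snd)) =
      d A ≫ S.map (biprod.lift biprod.fst (biprod.lift biprod.snd 0)) +
      d A ≫ S.map (biprod.lift biprod.fst (biprod.lift 0 biprod.snd))
  dc3 : ∀ A : C, S.η.app A ≫ d A = biprod.lift 0 (𝟙 A) ≫ S.η.app (A ⊞ A)
  dc4 : ∀ A : C, S.μ.app A ≫ d A =
    d (S.obj A) ≫
      S.map (biprod.fst ≫ S.map (biprod.lift (𝟙 A) 0) + biprod.snd ≫ d A) ≫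
      S.μ.app (A ⊞ A)
  dc5 : ∀ A : C, d A ≫ d (A ⊞ A) ≫
      S.map (biprod.lift (biprod.fst ≫ biprod.fst) (biprod.snd ≫ biprod.snd)) = d A
  dc6 : ∀ A : C, d A ≫ d (A ⊞ A) ≫
      S.map (biprod.lift
        (biprod.lift (biprod.fst ≫ biprod.fst) (biprod.snd ≫ biprod.fst))
        (biprod.lift (biprod.fst ≫ biprod.snd) (biprod.snd ≫ biprod.snd))) =
      d A ≫ d (A ⊞ A)

/-- `λ_A := ⟨S(π₁), S(π₁+π₄) ∘ ∂_{A×A}⟩ : S(A×A) ⟶ S(A) × S(A)`. -/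
noncomputable def lamOf (S : Monad C) (p : DiffCombTrans S) (A : C) :
    S.obj (A ⊞ A) ⟶ S.obj A ⊞ S.obj A :=
  biprod.lift (S.map biprod.fst)
    (p.d (A ⊞ A) ≫ S.map (biprod.fst ≫ biprod.fst + biprod.snd ≫ biprod.snd))

/-- [DC.N]: `S(⟨π₁, −π₂⟩) ∘ ∂_A = −∂_A`. -/
theorem diffCombTrans_neg (S : Monad C) (p : DiffCombTrans S) (A : C) :
    p.d A ≫ S.map (biprod.lift biprod.fst (-biprod.snd)) = -p.d A := by
  have key := congrArg
    (fun g => g ≫ S.map (biprod.lift biprod.fst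
      (biprod.snd ≫ (biprod.fst - biprod.snd) : (A ⊞ (A ⊞ A)) ⟶ A)))
    (p.dc2 A)
  simp only [Preadditive.add_comp, Category.assoc, ← S.map_comp] at key
  have e1 : (biprod.lift biprod.fst (biprod.lift biprod.snd biprod.snd) ≫
      biprod.lift biprod.fst (biprod.snd ≫ (biprod.fst - biprod.snd)) :
      (A ⊞ A) ⟶ A ⊞ A) = biprod.lift biprod.fst 0 := by
    ext <;> simp
  have e2 : (biprod.lift biprod.fst (biprod.lift biprod.snd 0) ≫
      biprod.lift biprod.fst (biprod.snd ≫ (biprod.fst - biprod.snd)) :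
      (A ⊞ A) ⟶ A ⊞ A) = 𝟙 (A ⊞ A) := by
    ext <;> simp
  have e3 : (biprod.lift biprod.fst (biprod.lift 0 biprod.snd) ≫
      biprod.lift biprod.fst (biprod.snd ≫ (biprod.fst - biprod.snd)) :
      (A ⊞ A) ⟶ A ⊞ A) = biprod.lift biprod.fst (-biprod.snd) := by
    ext <;> simp
  rw [e1, e2, e3] at key
  have z : p.d A ≫ S.map (biprod.lift biprod.fst (0 : (A ⊞ A) ⟶ A)) = 0 := by
    have : (biprod.lift biprod.fst (0 : (A ⊞ A) ⟶ A)) =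
        biprod.fst ≫ biprod.lift (𝟙 A) 0 := by ext <;> simp
    rw [this, S.map_comp, ← Category.assoc, p.dc1, zero_comp]
  rw [z, S.map_id, Category.comp_id] at key
  exact eq_neg_of_add_eq_zero_right key.symm
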